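/- Let (Ω, ℱ, P) be a probability space, let G and V be real random variables such that G has Gaussian law with mean m ∈ ℝ and variance v > 0, G and V are independent, and let D ∈ ℝ be such that P(V < D) > 0. Let c > 0, R > 0 and X ≥ 0 be real constants, and set w := log(1/c + R·X) − m. Then the conditional expectation of (1 − c·(e^G − R·X))₊ given the event {V < D} equals (1 + c·R·X)·Φ(w/√v) − c·e^{m + v/2}·Φ(w/√v − √v); that is, E[(1 − c·(e^G − R·X))₊ · 1_{{V < D}}] / P(V < D) = (1 + c·R·X)·Φ(w/√v) − c·e^{m + v/2}·Φ(w/√v − √v). -/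

import Mathlib

open MeasureTheory ProbabilityTheory

/-- The standard normal density `φ(x) = (2π)^{-1/2} e^{-x²/2}`. -/
noncomputable def stdGaussianPDF (x : ℝ) : ℝ :=
  (Real.sqrt (2 * Real.pi))⁻¹ * Real.exp (-x ^ 2 / 2)

/-- The standard normal cumulative distribution function `Φ`. -/
noncomputable def stdGaussianCDF (x : ℝ) : ℝ :=
  ∫ z in Set.Iio x, stdGaussianPDF z

open Real Set
open scoped NNReal ENNReal

lemma std_eq : stdGaussianPDF = gaussianPDFReal 0 1 := by
  funext x; simp [stdGaussianPDF, gaussianPDFReal]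

lemma std_integrable : Integrable stdGaussianPDF := by
  rw [std_eq]; exact integrable_gaussianPDFReal 0 1

lemma std_shift (a b : ℝ) :
    ∫ z in Set.Iic b, stdGaussianPDF (z - a) = stdGaussianCDF (b - a) := by
  have h1 : (Set.Iic b).indicator (fun z => stdGaussianPDF (z - a))
      = fun z => (Set.Iic (b - a)).indicator stdGaussianPDF (z - a) := by
    funext z
    by_cases h : z ≤ b
    · simp [Set.indicator_of_mem, h, sub_le_sub_right h a, Set.mem_Iic]
    · rw [Set.indicator_of_notMem (by simpa using h), Set.indicator_of_notMem]
      intro hz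
      rw [Set.mem_Iic] at hz
      exact h (by linarith)
  rw [← integral_indicator measurableSet_Iic, h1,
    integral_sub_right_eq_self ((Set.Iic (b - a)).indicator stdGaussianPDF) a,
    integral_indicator measurableSet_Iic, stdGaussianCDF,
    setIntegral_congr_set Iio_ae_eq_Iic]

lemma gauss_map (m v : ℝ) (hv : 0 < v) :
    gaussianReal m ⟨v, hv.le⟩ = (gaussianReal 0 1).map (fun z => Real.sqrt v * z + m) := by
  have h1 : (fun z : ℝ => Real.sqrt v * z + m) = (· + m) ∘ (Real.sqrt v * ·) := rfl
  rw [h1, ← Measure.map_map (measurable_add_const m) (measurable_const_mul _),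
    gaussianReal_map_const_mul, gaussianReal_map_add_const]
  congr 1
  · ring
  · ext
    simp [sq_sqrt hv.le]
    rfl

lemma gauss_int (m v : ℝ) (hv : 0 < v) (c R X : ℝ) (hc : 0 < c) (hR : 0 < R) (hX : 0 ≤ X) :
    ∫ x, max (1 - c * (Real.exp x - R * X)) 0 ∂(gaussianReal m ⟨v, hv.le⟩)
      = (1 + c * R * X) * stdGaussianCDF ((Real.log (1 / c + R * X) - m) / Real.sqrt v)
        - c * Real.exp (m + v / 2)
          * stdGaussianCDF ((Real.log (1 / c + R * X) - m) / Real.sqrt v - Real.sqrt v) := by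
  have hsv : 0 < Real.sqrt v := Real.sqrt_pos.2 hv
  set L := Real.log (1 / c + R * X) with hL
  set w := (L - m) / Real.sqrt v with hw
  set f : ℝ → ℝ := fun x => max (1 - c * (Real.exp x - R * X)) 0 with hf
  have hfc : Continuous f :=
    (continuous_const.sub (continuous_const.mul (Real.continuous_exp.sub continuous_const))).max
      continuous_const
  have hpos : 0 < 1 / c + R * X := by positivity
  have step1 : ∫ x, f x ∂(gaussianReal m ⟨v, hv.le⟩)
      = ∫ z, f (Real.sqrt v * z + m) ∂(gaussianReal 0 1) := by
    rw [gauss_map m v hv, integral_map (by fun_prop) hfc.aestronglyMeasurable]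
  have step2 : ∫ z, f (Real.sqrt v * z + m) ∂(gaussianReal 0 1)
      = ∫ z, stdGaussianPDF z * f (Real.sqrt v * z + m) := by
    rw [gaussianReal_of_var_ne_zero 0 one_ne_zero]
    have hd : gaussianPDF 0 1 = fun x => ((Real.toNNReal (gaussianPDFReal 0 1 x) : ℝ≥0) : ℝ≥0∞) := by
      funext x; rfl
    rw [hd, integral_withDensity_eq_integral_smul
      ((measurable_gaussianPDFReal 0 1).real_toNNReal) _]
    congr 1
    funext z
    rw [NNReal.smul_def, Real.coe_toNNReal _ (gaussianPDFReal_nonneg 0 1 z), std_eq]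
    simp [smul_eq_mul]
  have hsq : Real.sqrt v * Real.sqrt v = v := Real.mul_self_sqrt hv.le
  have key : ∀ z, stdGaussianPDF z * f (Real.sqrt v * z + m)
      = (Set.Iic w).indicator (fun z => (1 + c * R * X) * stdGaussianPDF z
          - (c * Real.exp (m + v / 2)) * stdGaussianPDF (z - Real.sqrt v)) z := by
    intro z
    have hiff : z ≤ w ↔ Real.sqrt v * z + m ≤ L := by
      rw [hw, le_div_iff₀ hsv]
      constructor <;> intro h <;> nlinarith
    have hexp : stdGaussianPDF z * Real.exp (Real.sqrt v * z + m)
        = Real.exp (m + v / 2) * stdGaussianPDF (z - Real.sqrt v) := by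
      simp only [stdGaussianPDF]
      rw [mul_assoc, ← Real.exp_add, mul_comm (Real.exp (m + v / 2)), mul_assoc, ← Real.exp_add]
      congr 1
      have : (z - Real.sqrt v) ^ 2 = z ^ 2 - 2 * (Real.sqrt v * z) + Real.sqrt v * Real.sqrt v := by
        ring
      rw [this, hsq]; ring
    by_cases h : z ≤ w
    · rw [Set.indicator_of_mem (Set.mem_Iic.2 h)]
      have hle : Real.exp (Real.sqrt v * z + m) ≤ 1 / c + R * X := by
        calc Real.exp (Real.sqrt v * z + m) ≤ Real.exp L := Real.exp_le_exp.2 (hiff.1 h)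
        _ = 1 / c + R * X := Real.exp_log hpos
      have hnn : 0 ≤ 1 - c * (Real.exp (Real.sqrt v * z + m) - R * X) := by
        have : c * (Real.exp (Real.sqrt v * z + m) - R * X) ≤ c * (1 / c) := by
          rw [mul_le_mul_iff_right₀ hc]; linarith
        rw [mul_one_div, div_self hc.ne'] at this
        linarith
      rw [hf]
      simp only [max_eq_left hnn]
      linear_combination (-c) * hexp
    · rw [Set.indicator_of_notMem (by simpa using h)]
      have hgt : 1 / c + R * X < Real.exp (Real.sqrt v * z + m) := by
        have : L < Real.sqrt v * z + m := by
          by_contra hcon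
          exact h (hiff.2 (by linarith))
        calc 1 / c + R * X = Real.exp L := (Real.exp_log hpos).symm
        _ < _ := Real.exp_lt_exp.2 this
      have : 1 - c * (Real.exp (Real.sqrt v * z + m) - R * X) < 0 := by
        have : c * (1 / c) < c * (Real.exp (Real.sqrt v * z + m) - R * X) := by
          rw [mul_lt_mul_iff_right₀ hc]; linarith
        rw [mul_one_div, div_self hc.ne'] at this
        linarith
      rw [hf]
      simp [max_eq_right this.le]
  rw [step1, step2]
  simp_rw [key]
  rw [integral_indicator measurableSet_Iic]
  have hi1 : IntegrableOn (fun z => (1 + c * R * X) * stdGaussianPDF z) (Set.Iic w) :=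
    (std_integrable.const_mul _).integrableOn
  have hi2 : IntegrableOn (fun z => (c * Real.exp (m + v / 2)) * stdGaussianPDF (z - Real.sqrt v))
      (Set.Iic w) := ((std_integrable.comp_sub_right _).const_mul _).integrableOn
  rw [integral_sub hi1 hi2, integral_const_mul, integral_const_mul, std_shift,
    setIntegral_congr_set Iio_ae_eq_Iic.symm]
  rfl

/-- If `G` is Gaussian with mean `m` and variance `v`, independent of `V`, `P(V < D) > 0`,
`c, R > 0` and `X ≥ 0`, then with `w = log(1/c + R X) - m`,
`E[(1 - c (e^G - R X))₊ | V < D]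
  = (1 + c R X) Φ(w/√v) - c e^{m + v/2} Φ(w/√v - √v)`. -/
theorem condExp_LGD_real_estate {Ω : Type*} [MeasurableSpace Ω]
    (P : Measure Ω) [IsProbabilityMeasure P]
    (G V : Ω → ℝ) (hGmeas : Measurable G) (hVmeas : Measurable V)
    (m v : ℝ) (hv : 0 < v)
    (hlaw : P.map G = gaussianReal m ⟨v, hv.le⟩)
    (hindep : IndepFun G V P)
    (D : ℝ) (hD : 0 < (P {ω | V ω < D}).toReal)
    (c R X : ℝ) (hc : 0 < c) (hR : 0 < R) (hX : 0 ≤ X) :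
    (∫ ω in {ω | V ω < D}, max (1 - c * (Real.exp (G ω) - R * X)) 0 ∂P)
        / (P {ω | V ω < D}).toReal
      = (1 + c * R * X) * stdGaussianCDF ((Real.log (1 / c + R * X) - m) / Real.sqrt v)
        - c * Real.exp (m + v / 2)
          * stdGaussianCDF ((Real.log (1 / c + R * X) - m) / Real.sqrt v - Real.sqrt v) := by
  set f : ℝ → ℝ := fun x => max (1 - c * (Real.exp x - R * X)) 0 with hf
  have hfc : Continuous f :=
    (continuous_const.sub (continuous_const.mul (Real.continuous_exp.sub continuous_const))).max
      continuous_const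
  have hA : MeasurableSet {ω | V ω < D} := hVmeas measurableSet_Iio
  set Y : Ω → ℝ := fun ω => (Set.Iio D).indicator (fun _ => (1 : ℝ)) (V ω) with hY
  have hYmeas : Measurable Y :=
    (measurable_const.indicator measurableSet_Iio).comp hVmeas
  have h1 : ∫ ω in {ω | V ω < D}, f (G ω) ∂P = ∫ ω, f (G ω) * Y ω ∂P := by
    rw [← integral_indicator hA]
    congr 1
    funext ω
    by_cases hω : V ω < D
    · simp [hY, Set.indicator_of_mem, hω, Set.mem_Iio, Set.mem_setOf_eq]
    · simp [hY, Set.indicator_of_notMem, hω, Set.mem_Iio, Set.mem_setOf_eq]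
  have hindY : IndepFun (fun ω => f (G ω)) Y P :=
    hindep.comp hfc.measurable (measurable_const.indicator measurableSet_Iio)
  have h2 : ∫ ω, f (G ω) * Y ω ∂P = (∫ ω, f (G ω) ∂P) * (∫ ω, Y ω ∂P) :=
    IndepFun.integral_mul_eq_mul_integral hindY (hfc.measurable.comp hGmeas).aestronglyMeasurable
      hYmeas.aestronglyMeasurable
  have h3 : ∫ ω, f (G ω) ∂P = ∫ x, f x ∂(gaussianReal m ⟨v, hv.le⟩) := by
    rw [← hlaw, integral_map hGmeas.aemeasurable hfc.aestronglyMeasurable]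
  have h4 : ∫ ω, Y ω ∂P = (P {ω | V ω < D}).toReal := by
    have : Y = {ω | V ω < D}.indicator (fun _ => (1 : ℝ)) := by
      funext ω
      by_cases hω : V ω < D
      · simp [hY, Set.indicator_of_mem, hω, Set.mem_Iio, Set.mem_setOf_eq]
      · simp [hY, Set.indicator_of_notMem, hω, Set.mem_Iio, Set.mem_setOf_eq]
    rw [this]; exact integral_indicator_one hA
  rw [h1, h2, h3, h4, gauss_int m v hv c R X hc hR hX, mul_div_assoc, div_self hD.ne', mul_one]
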